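/- Let m, m₀, J, J₂, R, c be strictly positive real numbers and let ℓ ≥ 0. Define K = m₀·ℓ·R³/(4c²), P = J₂ + R²m/4 + R²J/(4c²) and Q = R²J/(4c²) − R²m/4. Then 4K²c² + (Q² − P²)R² = 0 if and only if ℓ = Real.sqrt ((R²m + 2J₂)·(JR² + 2J₂c²)) / (m₀R²). -/

import Mathlib

/-- The algebraic classification from Section 8.2 of the paper for the two-wheeled
carriage: the condition `4K²c² + (Q² − P²)R² = 0` holds iff the distance `ℓ` takes the
distinguished value `√((R²m + 2J₂)(JR² + 2J₂c²))/(m₀R²)`. -/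
theorem carriage_ell_classification
    (m m₀ J J₂ R c ℓ K P Q : ℝ)
    (hm : 0 < m) (hm₀ : 0 < m₀) (hJ : 0 < J) (hJ₂ : 0 < J₂)
    (hR : 0 < R) (hc : 0 < c) (hℓ : 0 ≤ ℓ)
    (hK : K = m₀ * ℓ * R ^ 3 / (4 * c ^ 2))
    (hP : P = J₂ + R ^ 2 * m / 4 + R ^ 2 * J / (4 * c ^ 2))
    (hQ : Q = R ^ 2 * J / (4 * c ^ 2) - R ^ 2 * m / 4) :
    4 * K ^ 2 * c ^ 2 + (Q ^ 2 - P ^ 2) * R ^ 2 = 0 ↔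
      ℓ = Real.sqrt ((R ^ 2 * m + 2 * J₂) * (J * R ^ 2 + 2 * J₂ * c ^ 2)) / (m₀ * R ^ 2) := by
  set A : ℝ := (R ^ 2 * m + 2 * J₂) * (J * R ^ 2 + 2 * J₂ * c ^ 2) with hAdef
  have hA : 0 ≤ A := by positivity
  have hmR : (0:ℝ) < m₀ * R ^ 2 := by positivity
  have key : 4 * K ^ 2 * c ^ 2 + (Q ^ 2 - P ^ 2) * R ^ 2 = 0 ↔
      (m₀ * R ^ 2 * ℓ) ^ 2 = A := by
    subst hK hP hQ
    rw [hAdef]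
    constructor
    · intro h
      field_simp at h
      have h3 : (m₀ * R ^ 2 * ℓ) ^ 2 * (262144 * c ^ 10 * R ^ 2) =
          (R ^ 2 * m + 2 * J₂) * (J * R ^ 2 + 2 * J₂ * c ^ 2) *
            (262144 * c ^ 10 * R ^ 2) := by
        linear_combination (65536 * c ^ 8) * h
      exact mul_right_cancel₀ (by positivity) h3
    · intro h
      field_simp
      linear_combination (4 * c ^ 2 * R ^ 2) * h
  rw [key]
  constructor
  · intro h
    have h2 : Real.sqrt A = m₀ * R ^ 2 * ℓ := by
      rw [← h, Real.sqrt_sq (by positivity)]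
    rw [h2]
    field_simp
  · intro h
    have h2 : m₀ * R ^ 2 * ℓ = Real.sqrt A := by
      rw [h]; field_simp
    rw [h2, Real.sq_sqrt hA]
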